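/- For every t ∈ ℝ and every τ ∈ ℂ, the function x ↦ exp(−t x²)·G(x)·cosh(τ x) is integrable on the interval (0, ∞); in particular M_t(1) = ∫₀^∞ exp(−t x²) G(x) cosh(x) dx is finite. -/

import Mathlib

open MeasureTheory

/-- `G x = Σ_{m=1}^∞ (2π²m⁴ e^{9x} − 3πm² e^{5x}) e^{−πm² e^{4x}}`. -/
noncomputable def G (x : ℝ) : ℝ :=
  ∑' m : ℕ, (2 * Real.pi ^ 2 * ((m : ℝ) + 1) ^ 4 * Real.exp (9 * x)
      - 3 * Real.pi * ((m : ℝ) + 1) ^ 2 * Real.exp (5 * x))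
    * Real.exp (-(Real.pi * ((m : ℝ) + 1) ^ 2 * Real.exp (4 * x)))

/-- `M t τ = ∫₀^∞ e^{−t x²} G x cosh (τ x) dx`. -/
noncomputable def M (t : ℝ) (τ : ℂ) : ℂ :=
  ∫ x in Set.Ioi (0 : ℝ),
    ((Real.exp (-(t * x ^ 2)) * G x : ℝ) : ℂ) * Complex.cosh (τ * (x : ℂ))

/-- `Ξ t λ = ∫₀^∞ e^{−t x²} G x cos (λ x) dx`. -/
noncomputable def Xi (t : ℝ) (l : ℂ) : ℂ :=
  ∫ x in Set.Ioi (0 : ℝ),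
    ((Real.exp (-(t * x ^ 2)) * G x : ℝ) : ℂ) * Complex.cos (l * (x : ℂ))

/-- `α t γ = (1/(2γ)!) ∫₀^∞ e^{−t x²} G x x^{2γ} dx`. -/
noncomputable def α (t : ℝ) (γ : ℕ) : ℝ :=
  (1 / (Nat.factorial (2 * γ) : ℝ)) *
    ∫ x in Set.Ioi (0 : ℝ), Real.exp (-(t * x ^ 2)) * G x * x ^ (2 * γ)

section Aux
open Real Filter

lemma summable_shift4 {r : ℝ} (hr0 : 0 ≤ r) (hr1 : r < 1) :
    Summable (fun m : ℕ => ((m : ℝ) + 1) ^ 4 * r ^ (m + 1)) := by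
  have h := (summable_pow_mul_geometric_of_norm_lt_one (R := ℝ) 4
    (by rwa [Real.norm_eq_abs, abs_of_nonneg hr0])).comp_injective Nat.succ_injective
  refine h.congr fun m => ?_
  simp only [Function.comp, Nat.succ_eq_add_one]
  push_cast
  ring

/-- termwise bound valid for all x, used for summability. -/
lemma term_norm_le (x : ℝ) (m : ℕ) :
    ‖(2 * Real.pi ^ 2 * ((m : ℝ) + 1) ^ 4 * Real.exp (9 * x)
      - 3 * Real.pi * ((m : ℝ) + 1) ^ 2 * Real.exp (5 * x))
    * Real.exp (-(Real.pi * ((m : ℝ) + 1) ^ 2 * Real.exp (4 * x)))‖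
    ≤ (2 * Real.pi ^ 2 * Real.exp (9 * x) + 3 * Real.pi * Real.exp (5 * x)) *
        (((m : ℝ) + 1) ^ 4 * Real.exp (-(Real.pi * Real.exp (4 * x))) ^ (m + 1)) := by
  have hπ := Real.pi_pos
  set n : ℝ := (m : ℝ) + 1 with hn
  have hn1 : 1 ≤ n := by simp [hn]
  have hn0 : 0 < n := by linarith
  have hE : 0 < Real.exp (4 * x) := Real.exp_pos _
  have h1 : ‖(2 * Real.pi ^ 2 * n ^ 4 * Real.exp (9 * x)
      - 3 * Real.pi * n ^ 2 * Real.exp (5 * x))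
      * Real.exp (-(Real.pi * n ^ 2 * Real.exp (4 * x)))‖
      ≤ (2 * Real.pi ^ 2 * n ^ 4 * Real.exp (9 * x)
        + 3 * Real.pi * n ^ 2 * Real.exp (5 * x))
        * Real.exp (-(Real.pi * n ^ 2 * Real.exp (4 * x))) := by
    rw [norm_mul, Real.norm_eq_abs, Real.norm_eq_abs, abs_of_pos (Real.exp_pos _)]
    gcongr
    refine (abs_sub _ _).trans ?_
    rw [abs_of_nonneg (by positivity), abs_of_nonneg (by positivity)]
  refine h1.trans ?_
  have h2 : Real.exp (-(Real.pi * n ^ 2 * Real.exp (4 * x)))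
      ≤ Real.exp (-(Real.pi * Real.exp (4 * x))) ^ (m + 1) := by
    rw [← Real.exp_nat_mul]
    apply Real.exp_le_exp.2
    have : (↑(m + 1) : ℝ) = n := by push_cast [hn]; ring
    rw [this]
    have hq : 0 ≤ Real.pi * Real.exp (4 * x) * (n ^ 2 - n) :=
      mul_nonneg (by positivity) (by nlinarith [sq_nonneg (n - 1)])
    nlinarith [hq]
  calc (2 * Real.pi ^ 2 * n ^ 4 * Real.exp (9 * x)
        + 3 * Real.pi * n ^ 2 * Real.exp (5 * x))
        * Real.exp (-(Real.pi * n ^ 2 * Real.exp (4 * x)))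
      ≤ ((2 * Real.pi ^ 2 * Real.exp (9 * x) + 3 * Real.pi * Real.exp (5 * x)) * n ^ 4)
        * Real.exp (-(Real.pi * Real.exp (4 * x))) ^ (m + 1) := by
        apply mul_le_mul _ h2 (by positivity) (by positivity)
        have hnn : n ^ 2 ≤ n ^ 4 := by nlinarith [sq_nonneg n, sq_nonneg (n ^ 2 - 1)]
        nlinarith [mul_nonneg (mul_nonneg (by positivity : (0:ℝ) ≤ 3 * Real.pi)
          (Real.exp_pos (5 * x)).le) (sub_nonneg.2 hnn)]
    _ = _ := by ring

lemma summable_term (x : ℝ) :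
    Summable (fun m : ℕ => (2 * Real.pi ^ 2 * ((m : ℝ) + 1) ^ 4 * Real.exp (9 * x)
      - 3 * Real.pi * ((m : ℝ) + 1) ^ 2 * Real.exp (5 * x))
    * Real.exp (-(Real.pi * ((m : ℝ) + 1) ^ 2 * Real.exp (4 * x)))) := by
  have hr0 : 0 ≤ Real.exp (-(Real.pi * Real.exp (4 * x))) := (Real.exp_pos _).le
  have hr1 : Real.exp (-(Real.pi * Real.exp (4 * x))) < 1 := by
    rw [Real.exp_lt_one_iff]
    have := Real.pi_pos
    have := Real.exp_pos (4 * x)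
    nlinarith
  exact Summable.of_norm <| Summable.of_nonneg_of_le (fun m => norm_nonneg _)
    (term_norm_le x) (((summable_shift4 hr0 hr1).mul_left _))

lemma summable_aux : Summable (fun m : ℕ =>
    (2 * Real.pi ^ 2 * ((m : ℝ) + 1) ^ 4 + 3 * Real.pi * ((m : ℝ) + 1) ^ 2) *
      Real.exp (-(Real.pi * ((m : ℝ) + 1) ^ 2 / 2))) := by
  have hπ := Real.pi_pos
  have hr0 : 0 ≤ Real.exp (-(Real.pi / 2)) := (Real.exp_pos _).le
  have hr1 : Real.exp (-(Real.pi / 2)) < 1 := by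
    rw [Real.exp_lt_one_iff]; linarith
  refine Summable.of_nonneg_of_le (fun m => by positivity)
    (fun m => ?_) (((summable_shift4 hr0 hr1).mul_left (2 * Real.pi ^ 2 + 3 * Real.pi)))
  set n : ℝ := (m : ℝ) + 1 with hn
  have hn1 : 1 ≤ n := by simp [hn]
  have h2 : Real.exp (-(Real.pi * n ^ 2 / 2)) ≤ Real.exp (-(Real.pi / 2)) ^ (m + 1) := by
    rw [← Real.exp_nat_mul]
    apply Real.exp_le_exp.2
    have : (↑(m + 1) : ℝ) = n := by push_cast [hn]; ring
    rw [this]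
    have hq : 0 ≤ Real.pi / 2 * (n ^ 2 - n) :=
      mul_nonneg (by positivity) (by nlinarith [sq_nonneg (n - 1)])
    nlinarith [hq]
  calc (2 * Real.pi ^ 2 * n ^ 4 + 3 * Real.pi * n ^ 2) * Real.exp (-(Real.pi * n ^ 2 / 2))
      ≤ ((2 * Real.pi ^ 2 + 3 * Real.pi) * n ^ 4) * Real.exp (-(Real.pi / 2)) ^ (m + 1) := by
        apply mul_le_mul _ h2 (by positivity) (by positivity)
        have hnn : n ^ 2 ≤ n ^ 4 := by nlinarith [sq_nonneg n, sq_nonneg (n ^ 2 - 1)]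
        nlinarith [mul_nonneg (by positivity : (0:ℝ) ≤ 3 * Real.pi) (sub_nonneg.2 hnn)]
    _ = _ := by ring

noncomputable def CG : ℝ := ∑' m : ℕ,
    (2 * Real.pi ^ 2 * ((m : ℝ) + 1) ^ 4 + 3 * Real.pi * ((m : ℝ) + 1) ^ 2) *
      Real.exp (-(Real.pi * ((m : ℝ) + 1) ^ 2 / 2))

lemma CG_nonneg : 0 ≤ CG := tsum_nonneg fun m => by positivity

/-- termwise bound for x ≥ 0. -/
lemma term_norm_le' {x : ℝ} (hx : 0 ≤ x) (m : ℕ) :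
    ‖(2 * Real.pi ^ 2 * ((m : ℝ) + 1) ^ 4 * Real.exp (9 * x)
      - 3 * Real.pi * ((m : ℝ) + 1) ^ 2 * Real.exp (5 * x))
    * Real.exp (-(Real.pi * ((m : ℝ) + 1) ^ 2 * Real.exp (4 * x)))‖
    ≤ ((2 * Real.pi ^ 2 * ((m : ℝ) + 1) ^ 4 + 3 * Real.pi * ((m : ℝ) + 1) ^ 2) *
        Real.exp (-(Real.pi * ((m : ℝ) + 1) ^ 2 / 2))) *
      (Real.exp (9 * x) * Real.exp (-(Real.pi / 2 * Real.exp (4 * x)))) := by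
  have hπ := Real.pi_pos
  set n : ℝ := (m : ℝ) + 1 with hn
  have hn1 : 1 ≤ n := by simp [hn]
  have hE : 1 ≤ Real.exp (4 * x) := Real.one_le_exp (by linarith)
  have h59 : Real.exp (5 * x) ≤ Real.exp (9 * x) := Real.exp_le_exp.2 (by linarith)
  have h1 : ‖(2 * Real.pi ^ 2 * n ^ 4 * Real.exp (9 * x)
      - 3 * Real.pi * n ^ 2 * Real.exp (5 * x))
      * Real.exp (-(Real.pi * n ^ 2 * Real.exp (4 * x)))‖
      ≤ ((2 * Real.pi ^ 2 * n ^ 4 + 3 * Real.pi * n ^ 2) * Real.exp (9 * x))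
        * Real.exp (-(Real.pi * n ^ 2 * Real.exp (4 * x))) := by
    rw [norm_mul, Real.norm_eq_abs, Real.norm_eq_abs, abs_of_pos (Real.exp_pos _)]
    gcongr
    refine (abs_sub _ _).trans ?_
    rw [abs_of_nonneg (by positivity), abs_of_nonneg (by positivity)]
    nlinarith [mul_nonneg (by positivity : (0:ℝ) ≤ 3 * Real.pi * n ^ 2) (sub_nonneg.2 h59)]
  refine h1.trans ?_
  have h2 : Real.exp (-(Real.pi * n ^ 2 * Real.exp (4 * x)))
      ≤ Real.exp (-(Real.pi * n ^ 2 / 2)) * Real.exp (-(Real.pi / 2 * Real.exp (4 * x))) := by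
    rw [← Real.exp_add]
    apply Real.exp_le_exp.2
    have hA : 0 ≤ Real.pi / 2 * (n ^ 2 * (Real.exp (4 * x) - 1)) :=
      mul_nonneg (by positivity) (mul_nonneg (by positivity) (by linarith))
    have hB : 0 ≤ Real.pi / 2 * (Real.exp (4 * x) * (n ^ 2 - 1)) :=
      mul_nonneg (by positivity) (mul_nonneg (by positivity) (by nlinarith [sq_nonneg (n - 1)]))
    nlinarith [hA, hB]
  calc ((2 * Real.pi ^ 2 * n ^ 4 + 3 * Real.pi * n ^ 2) * Real.exp (9 * x))
        * Real.exp (-(Real.pi * n ^ 2 * Real.exp (4 * x)))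
      ≤ ((2 * Real.pi ^ 2 * n ^ 4 + 3 * Real.pi * n ^ 2) * Real.exp (9 * x))
        * (Real.exp (-(Real.pi * n ^ 2 / 2)) * Real.exp (-(Real.pi / 2 * Real.exp (4 * x)))) := by
        apply mul_le_mul_of_nonneg_left h2 (by positivity)
    _ = _ := by ring

lemma G_abs_le {x : ℝ} (hx : 0 ≤ x) :
    |G x| ≤ CG * (Real.exp (9 * x) * Real.exp (-(Real.pi / 2 * Real.exp (4 * x)))) := by
  have hs : Summable (fun m : ℕ => ‖(2 * Real.pi ^ 2 * ((m : ℝ) + 1) ^ 4 * Real.exp (9 * x)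
      - 3 * Real.pi * ((m : ℝ) + 1) ^ 2 * Real.exp (5 * x))
      * Real.exp (-(Real.pi * ((m : ℝ) + 1) ^ 2 * Real.exp (4 * x)))‖) :=
    (summable_term x).abs
  have h1 : |G x| ≤ ∑' m : ℕ, ‖(2 * Real.pi ^ 2 * ((m : ℝ) + 1) ^ 4 * Real.exp (9 * x)
      - 3 * Real.pi * ((m : ℝ) + 1) ^ 2 * Real.exp (5 * x))
      * Real.exp (-(Real.pi * ((m : ℝ) + 1) ^ 2 * Real.exp (4 * x)))‖ := by
    rw [← Real.norm_eq_abs]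
    exact norm_tsum_le_tsum_norm hs
  refine h1.trans ?_
  have h2 := Summable.tsum_le_tsum (term_norm_le' hx) hs
    (summable_aux.mul_right (Real.exp (9 * x) * Real.exp (-(Real.pi / 2 * Real.exp (4 * x)))))
  rwa [tsum_mul_right] at h2

lemma G_measurable : Measurable G := by
  apply measurable_of_tendsto_metrizable
    (f := fun N x => ∑ m ∈ Finset.range N, (2 * Real.pi ^ 2 * ((m : ℝ) + 1) ^ 4 * Real.exp (9 * x)
      - 3 * Real.pi * ((m : ℝ) + 1) ^ 2 * Real.exp (5 * x))
    * Real.exp (-(Real.pi * ((m : ℝ) + 1) ^ 2 * Real.exp (4 * x))))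
  · intro N
    exact Finset.measurable_sum _ fun m _ => by fun_prop
  · rw [tendsto_pi_nhds]
    intro x
    exact (summable_term x).hasSum.tendsto_sum_nat

lemma cosh_norm_le (τ : ℂ) {x : ℝ} (hx : 0 ≤ x) :
    ‖Complex.cosh (τ * (x : ℂ))‖ ≤ Real.exp (‖τ‖ * x) := by
  have h : Complex.cosh (τ * x) = (Complex.exp (τ * x) + Complex.exp (-(τ * x))) / 2 := rfl
  rw [h]
  have h1 : ‖Complex.exp (τ * x)‖ ≤ Real.exp (‖τ‖ * x) := by
    rw [Complex.norm_exp]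
    apply Real.exp_le_exp.2
    calc (τ * x).re ≤ ‖τ * (x:ℂ)‖ := Complex.re_le_norm _
      _ = ‖τ‖ * x := by rw [norm_mul, Complex.norm_real, Real.norm_eq_abs, abs_of_nonneg hx]
  have h2 : ‖Complex.exp (-(τ * x))‖ ≤ Real.exp (‖τ‖ * x) := by
    rw [Complex.norm_exp]
    apply Real.exp_le_exp.2
    calc (-(τ * x)).re ≤ ‖(-(τ * (x:ℂ)))‖ := Complex.re_le_norm _
      _ = ‖τ‖ * x := by rw [norm_neg, norm_mul, Complex.norm_real, Real.norm_eq_abs,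
          abs_of_nonneg hx]
  have h3 : ‖Complex.exp (τ * x) + Complex.exp (-(τ * x))‖
      ≤ Real.exp (‖τ‖ * x) + Real.exp (‖τ‖ * x) :=
    (norm_add_le _ _).trans (add_le_add h1 h2)
  calc ‖(Complex.exp (τ * x) + Complex.exp (-(τ * x))) / 2‖
      = ‖Complex.exp (τ * x) + Complex.exp (-(τ * x))‖ / 2 := by
        rw [norm_div]; norm_num
    _ ≤ (Real.exp (‖τ‖ * x) + Real.exp (‖τ‖ * x)) / 2 := by linarith
    _ = Real.exp (‖τ‖ * x) := by ring

lemma exponent_bound (a b : ℝ) (ha : 0 ≤ a) (hb : 0 ≤ b) :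
    ∀ x : ℝ, 0 ≤ x →
      b * x + a * x ^ 2 + x ≤ Real.pi / 2 * Real.exp (4 * x) + ((b + 1) ^ 2 + (a + 1) ^ 2) := by
  intro x hx
  have h4 : x ^ 4 ≤ Real.pi / 2 * Real.exp (4 * x) := by
    have h1 : (1 + x) ^ 4 ≤ Real.exp x ^ 4 :=
      pow_le_pow_left₀ (by positivity) (by linarith [Real.add_one_le_exp x]) 4
    have h2 : Real.exp (4 * x) = Real.exp x ^ 4 := by
      rw [← Real.exp_nat_mul]; norm_num
    have hx4 : x ^ 4 ≤ (1 + x) ^ 4 := pow_le_pow_left₀ hx (by linarith) 4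
    nlinarith [Real.pi_gt_three, pow_nonneg hx 4]
  nlinarith [sq_nonneg (x - (b + 1)), sq_nonneg (x ^ 2 - (a + 1)), sq_nonneg x]

end Aux

/-- the integrand of `M t τ` is integrable on `(0, ∞)` for every `τ`;
in particular `M t 1 = ∫₀^∞ e^{−t x²} G x cosh x dx` is finite. -/
theorem M_integrand_integrable (t : ℝ) (τ : ℂ) :
    MeasureTheory.IntegrableOn
      (fun x : ℝ => ((Real.exp (-(t * x ^ 2)) * G x : ℝ) : ℂ) * Complex.cosh (τ * (x : ℂ)))
      (Set.Ioi (0 : ℝ)) := by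
  set K : ℝ := ((9 + ‖τ‖ + 1) ^ 2 + (|t| + 1) ^ 2) with hK
  apply Integrable.mono' (g := fun x => (CG * Real.exp K) * Real.exp (-1 * x))
  · exact (exp_neg_integrableOn_Ioi 0 one_pos).const_mul _
  · apply Measurable.aestronglyMeasurable
    have h1 : Measurable fun x : ℝ => Real.exp (-(t * x ^ 2)) * G x :=
      (Real.measurable_exp.comp (by fun_prop)).mul G_measurable
    exact (Complex.measurable_ofReal.comp h1).mul
      ((Complex.continuous_cosh.comp (continuous_const.mul Complex.continuous_ofReal)).measurable)
  · rw [ae_restrict_iff' measurableSet_Ioi]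
    filter_upwards with x hx
    have hx0 : (0 : ℝ) ≤ x := le_of_lt hx
    have hG := G_abs_le hx0
    have hch := cosh_norm_le τ hx0
    have h1 : ‖((Real.exp (-(t * x ^ 2)) * G x : ℝ) : ℂ) * Complex.cosh (τ * (x : ℂ))‖
        = Real.exp (-(t * x ^ 2)) * |G x| * ‖Complex.cosh (τ * (x : ℂ))‖ := by
      rw [norm_mul, Complex.norm_real, Real.norm_eq_abs, abs_mul,
        abs_of_pos (Real.exp_pos _)]
    rw [h1]
    have hexp : Real.exp (-(t * x ^ 2)) ≤ Real.exp (|t| * x ^ 2) := by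
      apply Real.exp_le_exp.2
      have h := neg_abs_le t
      nlinarith [sq_nonneg x, abs_nonneg t]
    have hb := exponent_bound |t| (9 + ‖τ‖) (abs_nonneg t)
      (by have := norm_nonneg τ; linarith) x hx0
    calc Real.exp (-(t * x ^ 2)) * |G x| * ‖Complex.cosh (τ * (x : ℂ))‖
        ≤ Real.exp (|t| * x ^ 2) *
            (CG * (Real.exp (9 * x) * Real.exp (-(Real.pi / 2 * Real.exp (4 * x))))) *
            Real.exp (‖τ‖ * x) := by
          apply mul_le_mul (mul_le_mul hexp hG (abs_nonneg _) (by positivity)) hch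
            (norm_nonneg _)
            (mul_nonneg (Real.exp_pos _).le (mul_nonneg CG_nonneg (by positivity)))
      _ = CG * (Real.exp (|t| * x ^ 2) * Real.exp (9 * x) *
            Real.exp (-(Real.pi / 2 * Real.exp (4 * x))) * Real.exp (‖τ‖ * x)) := by ring
      _ = CG * Real.exp (|t| * x ^ 2 + 9 * x + -(Real.pi / 2 * Real.exp (4 * x)) + ‖τ‖ * x) := by
          rw [← Real.exp_add, ← Real.exp_add, ← Real.exp_add]
      _ ≤ CG * Real.exp (K + -1 * x) := by
          apply mul_le_mul_of_nonneg_left (Real.exp_le_exp.2 (by nlinarith [hb])) CG_nonneg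
      _ = CG * Real.exp K * Real.exp (-1 * x) := by rw [Real.exp_add]; ring
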